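/- The graphical Sierpinski carpet G = (V, E), with V = (z_0 + ℤ^d) ∩ F̂ and E the set of pairs of vertices at Euclidean distance 1, is a connected graph. -/

import Mathlib

open Set

/-- The open central block removed, at stage `n`, from the subcube of side `k^(-n)`
indexed by `m ∈ {0,…,k^n-1}^d`. -/
def centralBlock (d k a n : ℕ) (m : Fin d → ℕ) : Set (Fin d → ℝ) :=
  {x | ∀ i, (m i : ℝ) / (k : ℝ) ^ n + ((k : ℝ) - a) / (2 * (k : ℝ) ^ (n + 1)) < x i ∧
        x i < (m i : ℝ) / (k : ℝ) ^ n + ((k : ℝ) + a) / (2 * (k : ℝ) ^ (n + 1))}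

/-- The `n`-th stage `F_n` of the Sierpinski carpet construction in `[0,1]^d`. -/
def carpetF (d k a : ℕ) : ℕ → Set (Fin d → ℝ)
  | 0 => Set.Icc 0 1
  | n + 1 => carpetF d k a n \
      ⋃ m ∈ {m : Fin d → ℕ | ∀ i, m i < k ^ n}, centralBlock d k a n m

/-- The pre-Sierpinski carpet `F̂ = ⋃_{n ≥ 1} kⁿ F_n ⊆ [0,∞)^d`. -/
def preCarpet (d k a : ℕ) : Set (Fin d → ℝ) :=
  ⋃ n ∈ {n : ℕ | 1 ≤ n}, (fun x => ((k : ℝ) ^ n) • x) '' carpetF d k a n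

/-- The vertex set `V = (z₀ + ℤ^d) ∩ F̂` of the graphical Sierpinski carpet,
where `z₀ = (1/2, …, 1/2)`. -/
def carpetVertexSet (d k a : ℕ) : Set (Fin d → ℝ) :=
  {x | (∀ i, ∃ z : ℤ, x i = (z : ℝ) + 1 / 2) ∧ x ∈ preCarpet d k a}

/-- The graphical Sierpinski carpet: vertices `V`, edges the pairs of vertices at
Euclidean distance `1`. -/
def carpetGraph (d k a : ℕ) : SimpleGraph (carpetVertexSet d k a) where
  Adj u v := Real.sqrt (∑ i, (u.1 i - v.1 i) ^ 2) = 1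
  symm := by
    constructor
    intro u v h
    rw [← h]
    congr 1
    exact Finset.sum_congr rfl fun i _ => by ring
  loopless := by
    constructor
    intro u h
    simp [sub_self] at h

lemma half_lt (A z : ℕ) : (A:ℝ) < z + 1/2 ↔ A ≤ z := by
  constructor
  · intro h
    have : (A:ℝ) < z + 1 := by linarith
    exact_mod_cast Nat.lt_succ_iff.mp (by exact_mod_cast this)
  · intro h
    have : (A:ℝ) ≤ z := by exact_mod_cast h
    linarith

lemma lt_half (B z : ℕ) : (z:ℝ) + 1/2 < B ↔ z < B := by
  constructor
  · intro h
    have : (z:ℝ) < B := by linarith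
    exact_mod_cast this
  · intro h
    have : (z:ℝ) + 1 ≤ B := by exact_mod_cast h
    linarith

def digit (k s z : ℕ) : ℕ := z / k^s % k

lemma digit_decomp (k : ℕ) (s z : ℕ) :
    z = z/k^(s+1) * k^(s+1) + digit k s z * k^s + z % k^s := by
  have h0 : k^(s+1) = k^s * k := pow_succ k s
  have h1 : z/k^(s+1) = z/k^s/k := by rw [h0, Nat.div_div_eq_div_mul]
  have h2 : z/k^s = k * (z/k^s/k) + (z/k^s)%k := (Nat.div_add_mod _ _).symm
  have h3 : z = k^s * (z/k^s) + z%k^s := (Nat.div_add_mod _ _).symm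
  calc z = k^s * (z/k^s) + z%k^s := h3
    _ = k^s * (k * (z/k^s/k) + (z/k^s)%k) + z%k^s := by rw [← h2]
    _ = _ := by rw [h1, h0, digit]; ring

lemma digit_lt (k : ℕ) (hk : 1 ≤ k) (s z : ℕ) : digit k s z < k := Nat.mod_lt _ hk

lemma interval_iff_digit (k b a : ℕ) (hk : 1 ≤ k) (hba : b + a ≤ k) (z m s : ℕ) :
    (m*k^(s+1) + b*k^s ≤ z ∧ z < m*k^(s+1)+(b+a)*k^s) ↔
    (z/k^(s+1) = m ∧ b ≤ digit k s z ∧ digit k s z < b + a) := by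
  have hks : 0 < k^s := (Nat.pow_pos hk : 0 < k^s)
  have hdec := digit_decomp k s z
  have hdlt := digit_lt k hk s z
  have hmod : z % k^s < k^s := Nat.mod_lt _ hks
  have hpow : k^(s+1) = k * k^s := by rw [pow_succ]; ring
  generalize hE : digit k s z = e at *
  generalize hQ : z / k^(s+1) = q at *
  generalize hR : z % k^s = r at *
  have hx1 : (e+1)*k^s = e*k^s + k^s := by ring
  have hx2 : (b+a)*k^s = b*k^s + a*k^s := by ring
  constructor
  · rintro ⟨h1, h2⟩
    have hqm : q = m := by
      rcases Nat.lt_trichotomy q m with h | h | h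
      · exfalso
        have hlt : z < m * k^(s+1) := by
          calc z = q*k^(s+1) + e*k^s + r := hdec
            _ < q*k^(s+1) + (e+1)*k^s := by omega
            _ ≤ q*k^(s+1) + k*k^s := by
                have := Nat.mul_le_mul_right (k^s) (show e+1 ≤ k by omega); omega
            _ = (q+1)*k^(s+1) := by rw [hpow]; ring
            _ ≤ m*k^(s+1) := Nat.mul_le_mul_right _ (by omega)
        omega
      · exact h
      · exfalso
        have hge : (m+1)*k^(s+1) ≤ z := by
          calc (m+1)*k^(s+1) ≤ q*k^(s+1) := Nat.mul_le_mul_right _ (by omega)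
            _ ≤ z := by omega
        have hlt : z < (m+1)*k^(s+1) := by
          calc z < m*k^(s+1)+(b+a)*k^s := h2
            _ ≤ m*k^(s+1)+k*k^s := by
                have := Nat.mul_le_mul_right (k^s) hba; omega
            _ = (m+1)*k^(s+1) := by rw [hpow]; ring
        omega
    subst hqm
    refine ⟨rfl, ?_, ?_⟩
    · by_contra hc
      push_neg at hc
      have : e*k^s + r < b*k^s := by
        calc e*k^s + r < (e+1)*k^s := by omega
          _ ≤ b*k^s := Nat.mul_le_mul_right _ (by omega)
      omega
    · by_contra hc
      push_neg at hc
      have : (b+a)*k^s ≤ e*k^s := Nat.mul_le_mul_right _ hc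
      omega
  · rintro ⟨h1, h2, h3⟩
    subst h1
    constructor
    · have : b*k^s ≤ e*k^s := Nat.mul_le_mul_right _ h2
      omega
    · have : e*k^s + r < (b+a)*k^s := by
        calc e*k^s + r < (e+1)*k^s := by omega
          _ ≤ (b+a)*k^s := Nat.mul_le_mul_right _ (by omega)
      omega

lemma block_iff (k a b z m j s : ℕ) (hk : 1 ≤ k) (hk2b : k = a + 2*b) :
    ((m:ℝ)/(k:ℝ)^j + ((k:ℝ) - a)/(2*(k:ℝ)^(j+1)) < ((z:ℝ)+1/2) / (k:ℝ)^(j+1+s) ∧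
     ((z:ℝ)+1/2) / (k:ℝ)^(j+1+s) < (m:ℝ)/(k:ℝ)^j + ((k:ℝ) + a)/(2*(k:ℝ)^(j+1))) ↔
    (m*k^(s+1) + b*k^s ≤ z ∧ z < m*k^(s+1) + (b+a)*k^s) := by
  have hK : (0:ℝ) < (k:ℝ) := by exact_mod_cast hk
  have hKn : (0:ℝ) < (k:ℝ)^(j+1+s) := pow_pos hK _
  have hcast : (k:ℝ) = (a:ℝ) + 2*(b:ℝ) := by exact_mod_cast hk2b
  rw [lt_div_iff₀ hKn, div_lt_iff₀ hKn]
  have e1 : ((m:ℝ)/(k:ℝ)^j + ((k:ℝ) - a)/(2*(k:ℝ)^(j+1))) * (k:ℝ)^(j+1+s)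
      = ((m*k^(s+1) + b*k^s : ℕ) : ℝ) := by
    push_cast
    rw [show ((k:ℝ) - (a:ℝ)) = 2*(b:ℝ) by linarith]
    have hKj : ((k:ℝ))^j ≠ 0 := by positivity
    have hKj1 : ((k:ℝ))^(j+1) ≠ 0 := by positivity
    field_simp
    ring
  have e2 : ((m:ℝ)/(k:ℝ)^j + ((k:ℝ) + a)/(2*(k:ℝ)^(j+1))) * (k:ℝ)^(j+1+s)
      = ((m*k^(s+1) + (b+a)*k^s : ℕ) : ℝ) := by
    push_cast
    rw [show ((k:ℝ) + (a:ℝ)) = 2*((b:ℝ)+(a:ℝ)) by linarith]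
    have hKj : ((k:ℝ))^j ≠ 0 := by positivity
    have hKj1 : ((k:ℝ))^(j+1) ≠ 0 := by positivity
    field_simp
    ring
  rw [e1, e2, half_lt, lt_half]

lemma mem_carpetF (d k a : ℕ) (n : ℕ) (x : Fin d → ℝ) :
    x ∈ carpetF d k a n ↔ x ∈ Set.Icc 0 1 ∧
      ∀ j, j < n → ∀ m : Fin d → ℕ, (∀ i, m i < k^j) → x ∉ centralBlock d k a j m := by
  induction n with
  | zero => simp [carpetF]
  | succ n ih =>
    rw [carpetF, Set.mem_diff, ih]
    simp only [Set.mem_iUnion, Set.mem_setOf_eq, not_exists]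
    constructor
    · rintro ⟨⟨hIcc, hblk⟩, hnot⟩
      refine ⟨hIcc, fun j hj m hm => ?_⟩
      rcases Nat.lt_succ_iff_lt_or_eq.mp hj with h | h
      · exact hblk j h m hm
      · subst h; exact fun hx => hnot m hm hx
    · rintro ⟨hIcc, hblk⟩
      exact ⟨⟨hIcc, fun j hj m hm => hblk j (Nat.lt_succ_of_lt hj) m hm⟩,
        fun m hm hx => hblk n (Nat.lt_succ_self n) m hm hx⟩

def Good (d k b a : ℕ) (z : Fin d → ℕ) : Prop :=
  ∀ s : ℕ, ∃ i, ¬ (b ≤ digit k s (z i) ∧ digit k s (z i) < b + a)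

noncomputable def emb (d : ℕ) (z : Fin d → ℕ) : Fin d → ℝ := fun i => (z i : ℝ) + 1/2

lemma emb_mem_iff (d k b a : ℕ) (z : Fin d → ℕ) (hd : 1 ≤ d) (hk2b : k = a + 2*b)
    (hb : 1 ≤ b) (ha : 1 ≤ a) :
    emb d z ∈ preCarpet d k a ↔ Good d k b a z := by
  have hk : 1 ≤ k := by omega
  have hba : b + a ≤ k := by omega
  have hK : (0:ℝ) < (k:ℝ) := by exact_mod_cast hk
  constructor
  · -- membership → Good
    intro h
    simp only [preCarpet, Set.mem_iUnion, Set.mem_setOf_eq, Set.mem_image] at h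
    obtain ⟨n, hn1, y, hyF, hyx⟩ := h
    have hKn : (0:ℝ) < (k:ℝ)^n := pow_pos hK n
    have hyi : ∀ i, y i = ((z i:ℝ)+1/2)/(k:ℝ)^n := by
      intro i
      have h1 : (k:ℝ)^n * y i = (z i:ℝ) + 1/2 := by
        have := congrFun hyx i
        simpa [emb] using this
      field_simp [ne_of_gt hKn]
      linarith [h1]
    rw [mem_carpetF] at hyF
    obtain ⟨hIcc, hblk⟩ := hyF
    have hzlt : ∀ i, z i < k^n := by
      intro i
      have h1 : y i ≤ 1 := hIcc.2 i
      rw [hyi i, div_le_one hKn] at h1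
      have h2 : (z i : ℝ) < (k:ℝ)^n := by linarith
      exact_mod_cast h2
    intro s
    by_cases hs : n ≤ s
    · refine ⟨⟨0, by omega⟩, ?_⟩
      have : z ⟨0, by omega⟩ < k^s :=
        lt_of_lt_of_le (hzlt _) (Nat.pow_le_pow_right hk hs)
      have hdig : digit k s (z ⟨0, by omega⟩) = 0 := by
        unfold digit; rw [Nat.div_eq_of_lt this]; simp
      rw [hdig]; omega
    · push_neg at hs
      set j := n - 1 - s with hj
      have hn : n = j + 1 + s := by omega
      set m : Fin d → ℕ := fun i => z i / k^(s+1) with hm_def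
      have hm : ∀ i, m i < k^j := by
        intro i
        rw [hm_def]
        rw [Nat.div_lt_iff_lt_mul ((Nat.pow_pos hk : 0 < k^_))]
        calc z i < k^n := hzlt i
          _ = k^j * k^(s+1) := by rw [hn, ← pow_add]; congr 1; omega
      have hnb := hblk j (by omega) m hm
      simp only [centralBlock, Set.mem_setOf_eq, not_forall] at hnb
      obtain ⟨i, hi⟩ := hnb
      refine ⟨i, fun hc => hi ?_⟩
      have hiv := (interval_iff_digit k b a hk hba (z i) (m i) s).mpr ⟨rfl, hc.1, hc.2⟩
      have := (block_iff k a b (z i) (m i) j s hk hk2b).mpr hiv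
      rw [hyi i, hn]
      exact this
  · -- Good → membership
    intro hg
    have hk2 : 2 ≤ k := by omega
    obtain ⟨n, hn1, hzn⟩ : ∃ n, 1 ≤ n ∧ ∀ i, z i < k^n := by
      set M := Finset.univ.sup z with hM
      refine ⟨M + 1, by omega, fun i => ?_⟩
      have h1 : z i ≤ M := Finset.le_sup (Finset.mem_univ i)
      have h2 : M < k^M := Nat.lt_pow_self (by omega)
      have h3 : k^M ≤ k^(M+1) := Nat.pow_le_pow_right hk (by omega)
      omega
    have hKn : (0:ℝ) < (k:ℝ)^n := pow_pos hK n
    simp only [preCarpet, Set.mem_iUnion, Set.mem_setOf_eq, Set.mem_image]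
    refine ⟨n, hn1, fun i => ((z i:ℝ)+1/2)/(k:ℝ)^n, ?_, ?_⟩
    · rw [mem_carpetF]
      constructor
      · constructor
        · intro i
          show (0:ℝ) ≤ ((z i:ℝ)+1/2)/(k:ℝ)^n
          positivity
        · intro i
          show ((z i:ℝ)+1/2)/(k:ℝ)^n ≤ 1
          rw [div_le_one hKn]
          have h1 : (z i:ℝ) + 1/2 < ((k^n : ℕ):ℝ) := (lt_half _ _).mpr (hzn i)
          push_cast at h1
          linarith
      · intro j hj m hm hblk
        have hn : n = j + 1 + (n - 1 - j) := by omega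
        obtain ⟨i, hi⟩ := hg (n - 1 - j)
        apply hi
        have hbi := hblk i
        rw [hn] at hbi
        have := (block_iff k a b (z i) (m i) j (n-1-j) hk hk2b).mp hbi
        have := (interval_iff_digit k b a hk hba (z i) (m i) (n-1-j)).mp this
        exact this.2
    · funext i
      show (k:ℝ)^n * (((z i:ℝ)+1/2)/(k:ℝ)^n) = emb d z i
      rw [mul_div_cancel₀ _ (ne_of_gt hKn)]
      rfl

lemma digit_add_mul (k s u r : ℕ) (hk : 1 ≤ k) : digit k s (u * k^(s+1) + r) = digit k s r := by
  unfold digit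
  have h1 : u * k^(s+1) + r = r + (u*k) * k^s := by rw [pow_succ]; ring
  rw [h1, Nat.add_mul_div_right _ _ ((Nat.pow_pos hk : 0 < k^s)), Nat.add_mul_mod_self_right]

lemma digit_of_dvd (k s x : ℕ) (hk : 1 ≤ k) (h : k^(s+1) ∣ x) : digit k s x = 0 := by
  obtain ⟨u, rfl⟩ := h
  have : k^(s+1) * u = u * k^(s+1) + 0 := by ring
  rw [this, digit_add_mul _ _ _ _ hk]
  simp [digit]

lemma digit_add_of_lt (k M s t z : ℕ) (hk : 1 ≤ k) (ht : k^M ∣ t) (hz : z < k^M) (hs : M ≤ s) :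
    digit k s (t + z) = digit k s t := by
  obtain ⟨u, rfl⟩ := ht
  unfold digit
  have hpos : 0 < k^M := (Nat.pow_pos hk : 0 < k^M)
  have hks : k^s = k^M * k^(s-M) := by rw [← pow_add]; congr 1; omega
  have h1 : (k^M * u + z) / k^M = u := by
    rw [show k^M * u + z = z + u * k^M by ring, Nat.add_mul_div_right _ _ hpos,
      Nat.div_eq_of_lt hz]
    omega
  have h2 : (k^M * u) / k^M = u := by
    rw [show k^M * u = 0 + u * k^M by ring, Nat.add_mul_div_right _ _ hpos]
    simp
  rw [hks, ← Nat.div_div_eq_div_mul, ← Nat.div_div_eq_div_mul, h1, h2]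

lemma digit_zero_of_lt (k s z : ℕ) (h : z < k^s) : digit k s z = 0 := by
  unfold digit; rw [Nat.div_eq_of_lt h]; simp

lemma digit_corner (k N t c : ℕ) (hk : 1 ≤ k) (ht : k^(N+1) ∣ t) (hc : c < k) :
    digit k N (t + c * k^N) = c := by
  obtain ⟨u, rfl⟩ := ht
  unfold digit
  have hpos : 0 < k^N := (Nat.pow_pos hk : 0 < k^N)
  have h1 : k^(N+1) * u + c * k^N = (c + u*k) * k^N := by rw [pow_succ]; ring
  rw [h1, Nat.mul_div_cancel _ hpos, Nat.add_mul_mod_self_right, Nat.mod_eq_of_lt hc]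

lemma mem_vertex (d k b a : ℕ) (z : Fin d → ℕ) (hd : 1 ≤ d) (hk2b : k = a + 2*b)
    (hb : 1 ≤ b) (ha : 1 ≤ a) (hg : Good d k b a z) :
    emb d z ∈ carpetVertexSet d k a :=
  ⟨fun i => ⟨(z i : ℤ), by norm_num [emb]⟩,
    (emb_mem_iff d k b a z hd hk2b hb ha).mpr hg⟩

lemma adj_step (d k a : ℕ) (z : Fin d → ℕ) (j : Fin d)
    (hz : emb d z ∈ carpetVertexSet d k a)
    (hz' : emb d (Function.update z j (z j + 1)) ∈ carpetVertexSet d k a) :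
    (carpetGraph d k a).Adj ⟨emb d z, hz⟩ ⟨emb d (Function.update z j (z j + 1)), hz'⟩ := by
  show Real.sqrt _ = 1
  have hsum : ∑ i, ((emb d z i) - (emb d (Function.update z j (z j + 1)) i))^2 = 1 := by
    have h : ∀ i, ((emb d z i) - (emb d (Function.update z j (z j + 1)) i))^2
        = if i = j then 1 else 0 := by
      intro i
      by_cases hij : i = j
      · subst hij
        simp only [emb, Function.update_self, if_pos rfl]
        push_cast
        ring
      · simp [emb, Function.update_of_ne hij, hij]
    rw [Finset.sum_congr rfl (fun i _ => h i)]
    simp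
  rw [hsum]
  exact Real.sqrt_one

lemma vert_eq (d k a : ℕ) (x y : Fin d → ℝ) (hx : x ∈ carpetVertexSet d k a)
    (hy : y ∈ carpetVertexSet d k a) (h : x = y) :
    (⟨x, hx⟩ : carpetVertexSet d k a) = ⟨y, hy⟩ := Subtype.ext h

lemma reach_line (d k b a : ℕ) (hd : 1 ≤ d) (hk2b : k = a + 2*b) (hb : 1 ≤ b) (ha : 1 ≤ a)
    (w : Fin d → ℕ) (j : Fin d) (n : ℕ) (hn : n ≤ w j)
    (hgood : ∀ v, v ≤ n → Good d k b a (Function.update w j (w j - v)))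
    (hw : emb d w ∈ carpetVertexSet d k a)
    (hw' : emb d (Function.update w j (w j - n)) ∈ carpetVertexSet d k a) :
    (carpetGraph d k a).Reachable ⟨emb d w, hw⟩ ⟨emb d (Function.update w j (w j - n)), hw'⟩ := by
  induction n with
  | zero =>
    rw [vert_eq d k a _ _ hw' hw (by rw [Nat.sub_zero, Function.update_eq_self])]
  | succ n ih =>
    have h1 : n ≤ w j := by omega
    have hreach := ih h1 (fun v hv => hgood v (by omega))
      (mem_vertex d k b a _ hd hk2b hb ha (hgood n (by omega)))
    -- one more step from (w j - (n+1)) up to (w j - n)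
    set A := Function.update w j (w j - (n+1)) with hA
    have hup : Function.update A j (A j + 1) = Function.update w j (w j - n) := by
      funext i
      by_cases hij : i = j
      · subst hij
        simp only [hA, Function.update_self]
        omega
      · simp only [hA, Function.update_of_ne hij]
    have hmemA : emb d A ∈ carpetVertexSet d k a :=
      mem_vertex d k b a _ hd hk2b hb ha (hgood (n+1) le_rfl)
    have hmemB : emb d (Function.update A j (A j + 1)) ∈ carpetVertexSet d k a := by
      rw [hup]
      exact mem_vertex d k b a _ hd hk2b hb ha (hgood n (by omega))
    have hadj := adj_step d k a A j hmemA hmemB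
    have heq : (⟨emb d (Function.update A j (A j + 1)), hmemB⟩ : carpetVertexSet d k a)
        = ⟨emb d (Function.update w j (w j - n)),
            mem_vertex d k b a _ hd hk2b hb ha (hgood n (by omega))⟩ :=
      Subtype.ext (by show emb d (Function.update A j (A j + 1))
                          = emb d (Function.update w j (w j - n)); rw [hup])
    exact hreach.trans ((heq ▸ hadj).symm.reachable)

lemma exists_ne_fin (d : ℕ) (hd : 2 ≤ d) (i0 : Fin d) : ∃ j : Fin d, j ≠ i0 := by
  by_cases h : i0.val = 0
  · exact ⟨⟨1, by omega⟩, by simp [Fin.ext_iff, h]⟩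
  · exact ⟨⟨0, by omega⟩, by simp [Fin.ext_iff]; omega⟩

lemma good_mixed (d k b a N : ℕ) (hb : 1 ≤ b) (hk : 1 ≤ k)
    (t u : Fin d → ℕ) (ht : ∀ i, k^(N+1) ∣ t i)
    (hH : ∀ s, N+1 ≤ s → ∃ i, ¬(b ≤ digit k s (t i) ∧ digit k s (t i) < b + a))
    (hsmall : ∀ i, ∃ e, u i = t i + e ∧ e < k^(N+1))
    (i1 : Fin d) (hdvd : k^N ∣ u i1)
    (hwit : ¬(b ≤ digit k N (u i1) ∧ digit k N (u i1) < b + a)) :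
    Good d k b a u := by
  intro s
  rcases lt_trichotomy s N with hs | hs | hs
  · refine ⟨i1, ?_⟩
    have h0 : digit k s (u i1) = 0 :=
      digit_of_dvd _ _ _ hk (dvd_trans (pow_dvd_pow k (by omega)) hdvd)
    rw [h0]; omega
  · subst hs; exact ⟨i1, hwit⟩
  · obtain ⟨i, hi⟩ := hH s (by omega)
    refine ⟨i, ?_⟩
    obtain ⟨e, hue, he⟩ := hsmall i
    rw [hue, digit_add_of_lt k (N+1) s (t i) e hk (ht i) he (by omega)]
    exact hi

lemma reach_phaseB (d k b a : ℕ) (hd : 2 ≤ d) (hk2b : k = a + 2*b) (hb : 1 ≤ b) (ha : 1 ≤ a)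
    (N : ℕ) (t : Fin d → ℕ) (ht : ∀ i, k^(N+1) ∣ t i)
    (hH : ∀ s, N+1 ≤ s → ∃ i, ¬(b ≤ digit k s (t i) ∧ digit k s (t i) < b + a))
    (i0 : Fin d) (c0 : ℕ) (hc0 : c0 < k)
    (hm1 : emb d (Function.update t i0 (t i0 + c0 * k^N)) ∈ carpetVertexSet d k a)
    (hm2 : emb d t ∈ carpetVertexSet d k a) :
    (carpetGraph d k a).Reachable ⟨emb d (Function.update t i0 (t i0 + c0 * k^N)), hm1⟩
      ⟨emb d t, hm2⟩ := by
  have hk : 1 ≤ k := by omega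
  have hkN : 0 < k^N := (Nat.pow_pos hk : 0 < k^N)
  have hkN1 : k^(N+1) = k * k^N := by rw [pow_succ]; ring
  obtain ⟨j1, hj1⟩ := exists_ne_fin d hd i0
  set w := Function.update t i0 (t i0 + c0 * k^N) with hw
  have hwj : ∀ i, i ≠ i0 → w i = t i := fun i hi => Function.update_of_ne hi _ _
  have hwi0 : w i0 = t i0 + c0 * k^N := Function.update_self _ _ _
  have hgood : ∀ v, v ≤ c0 * k^N → Good d k b a (Function.update w i0 (w i0 - v)) := by
    intro v hv
    refine good_mixed d k b a N hb hk t _ ht hH ?_ j1 ?_ ?_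
    · intro i
      by_cases hi : i = i0
      · subst hi
        refine ⟨c0 * k^N - v, ?_, ?_⟩
        · rw [Function.update_self, hwi0]; omega
        · have : c0 * k^N < k * k^N := (Nat.mul_lt_mul_right hkN).mpr hc0
          omega
      · refine ⟨0, ?_, by positivity⟩
        rw [Function.update_of_ne hi, hwj i hi]
        omega
    · show k^N ∣ Function.update w i0 (w i0 - v) j1
      rw [Function.update_of_ne hj1, hwj j1 hj1]
      exact dvd_trans (pow_dvd_pow k (by omega)) (ht j1)
    · have h0 : digit k N (Function.update w i0 (w i0 - v) j1) = 0 := by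
        rw [Function.update_of_ne hj1, hwj j1 hj1]
        exact digit_of_dvd _ _ _ hk (ht j1)
      rw [h0]; omega
  have hend : Function.update w i0 (w i0 - c0 * k^N) = t := by
    funext i
    by_cases hi : i = i0
    · subst hi; rw [Function.update_self, hwi0]; omega
    · rw [Function.update_of_ne hi, hwj i hi]
  have hm2' : emb d (Function.update w i0 (w i0 - c0 * k^N)) ∈ carpetVertexSet d k a := by
    rw [hend]; exact hm2
  have := reach_line d k b a (by omega) hk2b hb ha w i0 (c0 * k^N)
    (by rw [hwi0]; omega) hgood hm1 hm2'
  have heq : (⟨emb d (Function.update w i0 (w i0 - c0 * k^N)), hm2'⟩ : carpetVertexSet d k a)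
      = ⟨emb d t, hm2⟩ := Subtype.ext (by show emb d _ = emb d t; rw [hend])
  exact heq ▸ this

lemma reach_phaseA (d k b a : ℕ) (hd : 2 ≤ d) (hk2b : k = a + 2*b) (hb : 1 ≤ b) (ha : 1 ≤ a)
    (N : ℕ) (t : Fin d → ℕ) (ht : ∀ i, k^(N+1) ∣ t i)
    (hH : ∀ s, N+1 ≤ s → ∃ i, ¬(b ≤ digit k s (t i) ∧ digit k s (t i) < b + a))
    (i0 : Fin d) :
    ∀ (n : ℕ) (c : Fin d → ℕ), (∀ i, c i < k) →
      ¬(b ≤ c i0 ∧ c i0 < b + a) → (∑ j ∈ Finset.univ.erase i0, c j) = n →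
      ∀ (hm1 : emb d (fun i => t i + c i * k^N) ∈ carpetVertexSet d k a)
        (hm2 : emb d (Function.update t i0 (t i0 + c i0 * k^N)) ∈ carpetVertexSet d k a),
      (carpetGraph d k a).Reachable ⟨emb d (fun i => t i + c i * k^N), hm1⟩
        ⟨emb d (Function.update t i0 (t i0 + c i0 * k^N)), hm2⟩ := by
  have hk : 1 ≤ k := by omega
  have hkN : 0 < k^N := (Nat.pow_pos hk : 0 < k^N)
  have hkN1 : k^(N+1) = k * k^N := by rw [pow_succ]; ring
  intro n
  induction n using Nat.strong_induction_on with
  | _ n IH =>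
    intro c hck hci0 hsum hm1 hm2
    by_cases h0 : ∀ j ∈ Finset.univ.erase i0, c j = 0
    · have heq : (fun i => t i + c i * k^N) = Function.update t i0 (t i0 + c i0 * k^N) := by
        funext i
        by_cases hi : i = i0
        · subst hi; rw [Function.update_self]
        · rw [Function.update_of_ne hi]
          have : c i = 0 := h0 i (Finset.mem_erase.mpr ⟨hi, Finset.mem_univ i⟩)
          rw [this]; omega
      rw [vert_eq d k a _ _ hm1 hm2 (by rw [heq])]
    · push_neg at h0
      obtain ⟨j, hjmem, hj0⟩ := h0
      have hji0 : j ≠ i0 := (Finset.mem_erase.mp hjmem).1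
      have hcj1 : 1 ≤ c j := by omega
      have hcjN : 1 * k^N ≤ c j * k^N := Nat.mul_le_mul_right _ hcj1
      set w : Fin d → ℕ := fun i => t i + c i * k^N with hwdef
      have hwj : w j = t j + c j * k^N := rfl
      -- goodness along the line in direction j
      have hgood : ∀ v, v ≤ k^N → Good d k b a (Function.update w j (w j - v)) := by
        intro v hv
        refine good_mixed d k b a N hb hk t _ ht hH ?_ i0 ?_ ?_
        · intro i
          by_cases hi : i = j
          · subst hi
            refine ⟨c i * k^N - v, ?_, ?_⟩
            · rw [Function.update_self]; show w i - v = t i + (c i * k^N - v); omega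
            · have : c i * k^N < k * k^N := (Nat.mul_lt_mul_right hkN).mpr (hck i)
              omega
          · refine ⟨c i * k^N, ?_, ?_⟩
            · rw [Function.update_of_ne hi]
            · have : c i * k^N < k * k^N := (Nat.mul_lt_mul_right hkN).mpr (hck i)
              omega
        · show k^N ∣ Function.update w j (w j - v) i0
          rw [Function.update_of_ne (Ne.symm hji0)]
          exact dvd_add (dvd_trans (pow_dvd_pow k (by omega)) (ht i0)) (dvd_mul_left _ _)
        · have h1 : digit k N (Function.update w j (w j - v) i0) = c i0 := by
            rw [Function.update_of_ne (Ne.symm hji0)]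
            exact digit_corner k N (t i0) (c i0) hk (ht i0) (hck i0)
          rw [h1]; exact hci0
      -- endpoint of line = corner with c j decreased
      set c' : Fin d → ℕ := Function.update c j (c j - 1) with hc'def
      have hend : Function.update w j (w j - k^N) = fun i => t i + c' i * k^N := by
        funext i
        by_cases hi : i = j
        · subst hi
          rw [Function.update_self]
          show w i - k^N = t i + Function.update c i (c i - 1) i * k^N
          rw [Function.update_self]
          have : (c i - 1) * k^N = c i * k^N - 1 * k^N := Nat.sub_mul _ _ _
          omega
        · rw [Function.update_of_ne hi]
          show w i = t i + Function.update c j (c j - 1) i * k^N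
          rw [Function.update_of_ne hi]
      have hgend : Good d k b a (fun i => t i + c' i * k^N) := by
        have := hgood (k^N) le_rfl
        rwa [hend] at this
      have hm3 : emb d (fun i => t i + c' i * k^N) ∈ carpetVertexSet d k a :=
        mem_vertex d k b a _ (by omega) hk2b hb ha hgend
      have hm3' : emb d (Function.update w j (w j - k^N)) ∈ carpetVertexSet d k a := by
        rw [hend]; exact hm3
      have hline := reach_line d k b a (by omega) hk2b hb ha w j (k^N)
        (by rw [hwj]; omega) hgood hm1 hm3'
      have heq1 : (⟨emb d (Function.update w j (w j - k^N)), hm3'⟩ : carpetVertexSet d k a)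
          = ⟨emb d (fun i => t i + c' i * k^N), hm3⟩ :=
        Subtype.ext (by show emb d _ = emb d _; rw [hend])
      -- recursion
      have hsum' : (∑ x ∈ Finset.univ.erase i0, c' x) = n - 1 := by
        rw [hc'def, Finset.sum_update_of_mem hjmem, ← Finset.erase_eq]
        have h2 := Finset.add_sum_erase _ c hjmem
        omega
      have hc'i0 : c' i0 = c i0 := Function.update_of_ne (Ne.symm hji0) _ _
      have hm2' : emb d (Function.update t i0 (t i0 + c' i0 * k^N)) ∈ carpetVertexSet d k a := by
        rw [hc'i0]; exact hm2
      have hn1 : 1 ≤ n := by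
        have h2 := Finset.add_sum_erase _ c hjmem
        omega
      have hrec := IH (n-1) (by omega) c' (fun i => by
          rw [hc'def]
          by_cases hi : i = j
          · rw [hi, Function.update_self]; have := hck j; omega
          · rw [Function.update_of_ne hi]; exact hck i)
        (by rw [hc'i0]; exact hci0) hsum' hm3 hm2'
      have heq2 : (⟨emb d (Function.update t i0 (t i0 + c' i0 * k^N)), hm2'⟩ : carpetVertexSet d k a)
          = ⟨emb d (Function.update t i0 (t i0 + c i0 * k^N)), hm2⟩ :=
        Subtype.ext (by show emb d _ = emb d _; rw [hc'i0])
      exact (hline.trans (heq1 ▸ SimpleGraph.Reachable.refl _)).trans (heq2 ▸ hrec)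

lemma reach_corner (d k b a : ℕ) (hd : 2 ≤ d) (hk2b : k = a + 2*b) (hb : 1 ≤ b) (ha : 1 ≤ a) :
    ∀ (N : ℕ) (t z : Fin d → ℕ), (∀ i, k^N ∣ t i) →
    (∀ s, N ≤ s → ∃ i, ¬(b ≤ digit k s (t i) ∧ digit k s (t i) < b + a)) →
    (∀ s, s < N → ∃ i, ¬(b ≤ digit k s (z i) ∧ digit k s (z i) < b + a)) →
    (∀ i, z i < k^N) →
    ∀ (hm1 : emb d (fun i => t i + z i) ∈ carpetVertexSet d k a)
      (hm2 : emb d t ∈ carpetVertexSet d k a),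
    (carpetGraph d k a).Reachable ⟨emb d (fun i => t i + z i), hm1⟩ ⟨emb d t, hm2⟩ := by
  have hk : 1 ≤ k := by omega
  intro N
  induction N with
  | zero =>
    intro t z _ _ _ hzlt hm1 hm2
    have hz0 : ∀ i, z i = 0 := fun i => by have := hzlt i; simpa using this
    have hfun : (fun i => t i + z i) = t := funext fun i => by have := hz0 i; omega
    rw [vert_eq d k a _ _ hm1 hm2 (by rw [hfun])]
  | succ N IH =>
    intro t z ht hH hL hzlt hm1 hm2
    have hkN : 0 < k^N := (Nat.pow_pos hk : 0 < k^N)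
    have hkN1 : k^(N+1) = k * k^N := by rw [pow_succ]; ring
    set c : Fin d → ℕ := fun i => z i / k^N with hcdef
    set r : Fin d → ℕ := fun i => z i % k^N with hrdef
    have hck : ∀ i, c i < k := by
      intro i
      show z i / k^N < k
      rw [Nat.div_lt_iff_lt_mul hkN]
      have := hzlt i; omega
    have hzdec : ∀ i, z i = c i * k^N + r i := by
      intro i
      have h1 := Nat.div_add_mod (z i) (k^N)
      have h2 : z i / k^N * k^N = k^N * (z i / k^N) := Nat.mul_comm _ _
      show z i = z i / k^N * k^N + z i % k^N
      omega
    have hdigN : ∀ i, digit k N (z i) = c i := by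
      intro i
      show z i / k^N % k = c i
      rw [Nat.mod_eq_of_lt (hck i)]
    -- t' = corner of the cell containing t+z
    set t' : Fin d → ℕ := fun i => t i + c i * k^N with ht'def
    have ht' : ∀ i, k^N ∣ t' i := fun i =>
      dvd_add (dvd_trans (pow_dvd_pow k (by omega)) (ht i)) (dvd_mul_left _ _)
    have hdigt' : ∀ i, digit k N (t' i) = c i := fun i =>
      digit_corner k N (t i) (c i) hk (ht i) (hck i)
    have hH' : ∀ s, N ≤ s → ∃ i, ¬(b ≤ digit k s (t' i) ∧ digit k s (t' i) < b + a) := by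
      intro s hs
      rcases eq_or_lt_of_le hs with hs' | hs'
      · obtain ⟨i, hi⟩ := hL N (by omega)
        refine ⟨i, ?_⟩
        rw [← hs', hdigt' i]
        rw [hdigN i] at hi
        exact hi
      · obtain ⟨i, hi⟩ := hH s (by omega)
        refine ⟨i, ?_⟩
        have heq : digit k s (t' i) = digit k s (t i) := by
          apply digit_add_of_lt k (N+1) s (t i) (c i * k^N) hk (ht i) _ (by omega)
          have : c i * k^N < k * k^N := (Nat.mul_lt_mul_right hkN).mpr (hck i)
          omega
        rw [heq]; exact hi
    have hL' : ∀ s, s < N → ∃ i, ¬(b ≤ digit k s (r i) ∧ digit k s (r i) < b + a) := by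
      intro s hs
      obtain ⟨i, hi⟩ := hL s (by omega)
      refine ⟨i, ?_⟩
      have heq : digit k s (z i) = digit k s (r i) := by
        have h1 : z i = (c i * k^(N-1-s)) * k^(s+1) + r i := by
          have h2 : c i * k^N = c i * k^(N-1-s) * k^(s+1) := by
            rw [mul_assoc, ← pow_add]
            congr 2
            omega
          rw [← h2]
          exact hzdec i
        rw [h1, digit_add_mul k s _ _ hk]
      rw [← heq]; exact hi
    have hrlt : ∀ i, r i < k^N := fun i => Nat.mod_lt _ hkN
    -- Good/membership for t'
    have hgt' : Good d k b a t' := by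
      obtain ⟨i1, hi1⟩ := hH' N le_rfl
      refine good_mixed d k b a N hb hk t t' (fun i => ht i) hH ?_ i1 (ht' i1) hi1
      intro i
      refine ⟨c i * k^N, rfl, ?_⟩
      have : c i * k^N < k * k^N := (Nat.mul_lt_mul_right hkN).mpr (hck i)
      omega
    have hmt' : emb d t' ∈ carpetVertexSet d k a :=
      mem_vertex d k b a _ (by omega) hk2b hb ha hgt'
    -- step 1 : t+z = t'+r → t'
    have hm1' : emb d (fun i => t' i + r i) ∈ carpetVertexSet d k a := by
      have : (fun i => t' i + r i) = fun i => t i + z i := by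
        funext i
        show t i + c i * k^N + r i = t i + z i
        have := hzdec i; omega
      rw [this]; exact hm1
    have hstep1 := IH t' r ht' hH' hL' hrlt hm1' hmt'
    have heq1 : (⟨emb d (fun i => t' i + r i), hm1'⟩ : carpetVertexSet d k a)
        = ⟨emb d (fun i => t i + z i), hm1⟩ := by
      refine Subtype.ext ?_
      show emb d _ = emb d _
      have hfun : (fun i => t' i + r i) = fun i => t i + z i := by
        funext i
        show t i + c i * k^N + r i = t i + z i
        have := hzdec i; omega
      rw [hfun]
    -- i0 with digit at level N outside B
    obtain ⟨i0, hi0⟩ := hL N (by omega)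
    rw [hdigN i0] at hi0
    -- step 2 : t' → update t i0
    have hgup : Good d k b a (Function.update t i0 (t i0 + c i0 * k^N)) := by
      refine good_mixed d k b a N hb hk t _ (fun i => ht i) hH ?_ i0 ?_ ?_
      · intro i
        by_cases hi : i = i0
        · subst hi
          refine ⟨c i * k^N, by rw [Function.update_self], ?_⟩
          have : c i * k^N < k * k^N := (Nat.mul_lt_mul_right hkN).mpr (hck i)
          omega
        · exact ⟨0, by rw [Function.update_of_ne hi]; omega, by positivity⟩
      · rw [Function.update_self]
        exact dvd_add (dvd_trans (pow_dvd_pow k (by omega)) (ht i0)) (dvd_mul_left _ _)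
      · rw [Function.update_self]
        rw [digit_corner k N (t i0) (c i0) hk (ht i0) (hck i0)]
        exact hi0
    have hmup : emb d (Function.update t i0 (t i0 + c i0 * k^N)) ∈ carpetVertexSet d k a :=
      mem_vertex d k b a _ (by omega) hk2b hb ha hgup
    have hstep2 := reach_phaseA d k b a hd hk2b hb ha N t ht hH i0
      (∑ j ∈ Finset.univ.erase i0, c j) c hck hi0 rfl hmt' hmup
    -- step 3 : update t i0 → t
    have hstep3 := reach_phaseB d k b a hd hk2b hb ha N t ht hH i0 (c i0) (hck i0) hmup hm2
    exact ((heq1 ▸ hstep1).trans hstep2).trans hstep3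

lemma good_zero (d k b a : ℕ) (hd : 1 ≤ d) (hb : 1 ≤ b) :
    Good d k b a (fun _ => 0) := by
  intro s
  refine ⟨⟨0, by omega⟩, ?_⟩
  have : digit k s 0 = 0 := by simp [digit]
  rw [this]; omega

lemma reach_zero (d k b a : ℕ) (hd : 2 ≤ d) (hk2b : k = a + 2*b) (hb : 1 ≤ b) (ha : 1 ≤ a)
    (z : Fin d → ℕ) (hg : Good d k b a z)
    (hm1 : emb d z ∈ carpetVertexSet d k a)
    (hm2 : emb d (fun _ => 0) ∈ carpetVertexSet d k a) :
    (carpetGraph d k a).Reachable ⟨emb d z, hm1⟩ ⟨emb d (fun _ => 0), hm2⟩ := by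
  have hk : 1 ≤ k := by omega
  obtain ⟨N, hzN⟩ : ∃ N, ∀ i, z i < k^N := by
    refine ⟨(Finset.univ.sup z) + 1, fun i => ?_⟩
    have h1 : z i ≤ Finset.univ.sup z := Finset.le_sup (Finset.mem_univ i)
    have h2 : Finset.univ.sup z < k^(Finset.univ.sup z) :=
      Nat.lt_pow_self (by omega)
    have h3 : k^(Finset.univ.sup z) ≤ k^(Finset.univ.sup z + 1) :=
      Nat.pow_le_pow_right hk (by omega)
    omega
  have hm1' : emb d (fun i => (fun _ : Fin d => 0) i + z i) ∈ carpetVertexSet d k a := by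
    have : (fun i => (fun _ : Fin d => 0) i + z i) = z := by funext i; simp
    rw [this]; exact hm1
  have h := reach_corner d k b a hd hk2b hb ha N (fun _ => 0) z
    (fun i => dvd_zero _)
    (fun s _ => ⟨⟨0, by omega⟩, by have : digit k s 0 = 0 := by simp [digit]
                                   rw [this]; omega⟩)
    (fun s _ => hg s) hzN hm1' hm2
  have heq : (⟨emb d (fun i => (fun _ : Fin d => 0) i + z i), hm1'⟩ : carpetVertexSet d k a)
      = ⟨emb d z, hm1⟩ := by
    refine Subtype.ext ?_
    show emb d _ = emb d _
    have : (fun i => (fun _ : Fin d => 0) i + z i) = z := by funext i; simp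
    rw [this]
  exact heq ▸ h

lemma vertex_decomp (d k b a : ℕ) (hd : 2 ≤ d) (hk2b : k = a + 2*b) (hb : 1 ≤ b) (ha : 1 ≤ a)
    (u : carpetVertexSet d k a) :
    ∃ z : Fin d → ℕ, emb d z = u.1 ∧ Good d k b a z := by
  have hk : 1 ≤ k := by omega
  obtain ⟨hint, hpre⟩ := u.2
  choose f hf using hint
  have hnonneg : ∀ i, (0:ℝ) ≤ u.1 i := by
    intro i
    simp only [preCarpet, Set.mem_iUnion, Set.mem_setOf_eq, Set.mem_image] at hpre
    obtain ⟨n, hn1, y, hyF, hyx⟩ := hpre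
    have h1 : (0:ℝ) ≤ y i := by
      rw [mem_carpetF] at hyF
      exact hyF.1.1 i
    have h2 : u.1 i = (k:ℝ)^n * y i := (congrFun hyx i).symm
    have hK : (0:ℝ) ≤ (k:ℝ)^n := by positivity
    rw [h2]
    exact mul_nonneg hK h1
  have hfpos : ∀ i, 0 ≤ f i := by
    intro i
    by_contra hc
    push_neg at hc
    have h1 : f i ≤ -1 := by omega
    have h2 : (f i : ℝ) ≤ -1 := by exact_mod_cast h1
    have h3 := hnonneg i
    rw [hf i] at h3
    linarith
  refine ⟨fun i => (f i).toNat, ?_, ?_⟩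
  · funext i
    show ((f i).toNat : ℝ) + 1/2 = u.1 i
    rw [hf i]
    congr 1
    exact_mod_cast Int.toNat_of_nonneg (hfpos i)
  · apply (emb_mem_iff d k b a _ (by omega) hk2b hb ha).mp
    have : emb d (fun i => (f i).toNat) = u.1 := by
      funext i
      show ((f i).toNat : ℝ) + 1/2 = u.1 i
      rw [hf i]
      congr 1
      exact_mod_cast Int.toNat_of_nonneg (hfpos i)
    rw [this]
    exact hpre

/-- the graphical Sierpinski carpet is a connected graph. -/
theorem carpetGraph_connected (d k a : ℕ) (hd : 2 ≤ d) (ha : 1 ≤ a) (hak : a < k)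
    (hpar : Even (a + k)) (hka : a + 2 ≤ k) :
    (carpetGraph d k a).Connected := by
  obtain ⟨c, hc⟩ := hpar
  set b := (k - a) / 2 with hbdef
  have hk2b : k = a + 2*b := by omega
  have hb : 1 ≤ b := by omega
  have hm0 : emb d (fun _ => 0) ∈ carpetVertexSet d k a :=
    mem_vertex d k b a _ (by omega) hk2b hb ha (good_zero d k b a (by omega) hb)
  rw [SimpleGraph.connected_iff]
  refine ⟨?_, ⟨⟨emb d (fun _ => 0), hm0⟩⟩⟩
  intro u v
  obtain ⟨zu, hzu, hgu⟩ := vertex_decomp d k b a hd hk2b hb ha u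
  obtain ⟨zv, hzv, hgv⟩ := vertex_decomp d k b a hd hk2b hb ha v
  have hmu : emb d zu ∈ carpetVertexSet d k a := by rw [hzu]; exact u.2
  have hmv : emb d zv ∈ carpetVertexSet d k a := by rw [hzv]; exact v.2
  have hu : u = ⟨emb d zu, hmu⟩ := Subtype.ext hzu.symm
  have hv : v = ⟨emb d zv, hmv⟩ := Subtype.ext hzv.symm
  rw [hu, hv]
  exact (reach_zero d k b a hd hk2b hb ha zu hgu hmu hm0).trans
    (reach_zero d k b a hd hk2b hb ha zv hgv hmv hm0).symm
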